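/- Matrix content of Corollary 5 (Haar implementability): for N = 2^L with L ≥ 1, there exist permutation matrices P_0,…,P_L ∈ {0,1}^{N×N} and block diagonal matrices D_1,…,D_L ∈ ℂ^{N×N}, each of the form diag(D_{ℓ,1},…,D_{ℓ,C_ℓ}, e^{iθ_{ℓ,1}},…,e^{iθ_{ℓ,S_ℓ}}) with 2C_ℓ + S_ℓ = N and 2×2 blocks D_{ℓ,c} = (1/√2)·[[e^{iθ_{ℓ,c,11}}, e^{iθ_{ℓ,c,12}}],[e^{iθ_{ℓ,c,21}}, e^{iθ_{ℓ,c,22}}]] satisfying θ_{ℓ,c,22} = π − θ_{ℓ,c,11} + θ_{ℓ,c,12} + θ_{ℓ,c,21}, such that W_N = P_L·D_L·⋯·P_1·D_1·P_0. Moreover this holds with C_ℓ = 2^{L−ℓ}, S_ℓ = 2^L − 2^{L−ℓ+1}, and all phases θ_{ℓ,c,11} = θ_{ℓ,c,12} = θ_{ℓ,c,21} = 0 and θ_{ℓ,s} = 0. -/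

import Mathlib

open Matrix Complex

/-- Cast a square matrix along an equality of sizes. -/
noncomputable def castM {m n : ℕ} (h : m = n) (A : Matrix (Fin m) (Fin m) ℂ) :
    Matrix (Fin n) (Fin n) ℂ :=
  Matrix.reindex (finCongr h) (finCongr h) A

/-- The block diagonal matrix
`diag(D_1, …, D_C, e^{iφ_1}, …, e^{iφ_S})` where
`D_c = (1/√2)·[[e^{iθ11(c)}, e^{iθ12(c)}],[e^{iθ21(c)}, e^{i(π − θ11(c) + θ12(c) + θ21(c))}]]`. -/
noncomputable def layerMatrix (C S : ℕ) (θ11 θ12 θ21 : Fin C → ℝ) (φ : Fin S → ℝ) :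
    Matrix (Fin (2 * C + S)) (Fin (2 * C + S)) ℂ :=
  Matrix.of fun i k =>
    if hi : i.val < 2 * C then
      if hk : k.val < 2 * C then
        if i.val / 2 = k.val / 2 then
          (1 / (Real.sqrt 2 : ℂ)) * Complex.exp (Complex.I *
            (((if i.val % 2 = 0 then
                  (if k.val % 2 = 0 then θ11 ⟨i.val / 2, by omega⟩
                   else θ12 ⟨i.val / 2, by omega⟩)
                else
                  (if k.val % 2 = 0 then θ21 ⟨i.val / 2, by omega⟩
                   else Real.pi - θ11 ⟨i.val / 2, by omega⟩ + θ12 ⟨i.val / 2, by omega⟩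
                        + θ21 ⟨i.val / 2, by omega⟩)) : ℝ) : ℂ))
        else 0
      else 0
    else if i = k then
      Complex.exp (Complex.I * ((φ ⟨i.val - 2 * C, by have := i.isLt; omega⟩ : ℝ) : ℂ))
    else 0

/-- A matrix is a permutation matrix if it is the 0/1 matrix of some permutation. -/
def IsPermutationMatrix {n : ℕ} (A : Matrix (Fin n) (Fin n) ℂ) : Prop :=
  ∃ σ : Equiv.Perm (Fin n), ∀ i k, A i k = if σ i = k then 1 else 0

/-- An `N×N` matrix has the layer form of Theorem 1: it is block diagonal
`diag(D_{1},…,D_{C}, e^{iθ_1},…,e^{iθ_S})` with `2C + S = N`, where each 2×2 block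
`D_c = (1/√2)·[[e^{iθ11}, e^{iθ12}],[e^{iθ21}, e^{iθ22}]]` satisfies
`θ22 = π − θ11 + θ12 + θ21`. -/
def LayerForm {N : ℕ} (Dm : Matrix (Fin N) (Fin N) ℂ) : Prop :=
  ∃ (C S : ℕ) (hCS : 2 * C + S = N) (θ11 θ12 θ21 : Fin C → ℝ) (φ : Fin S → ℝ),
    Dm = castM hCS (layerMatrix C S θ11 θ12 θ21 φ)

/-- 2×2 block matrix `[[A, B],[C, D]]` with m×m blocks, as an `(m+m)×(m+m)` matrix. -/
noncomputable def fromBlocks2 {m : ℕ} (A B C D : Matrix (Fin m) (Fin m) ℂ) :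
    Matrix (Fin (m + m)) (Fin (m + m)) ℂ :=
  Matrix.reindex finSumFinEquiv finSumFinEquiv (Matrix.fromBlocks A B C D)

/-- The Haar matrices: `W_1 = 1` and
`W_{2^{L+1}} = (1/√2)·[[W_{2^L}, W_{2^L}],[I, −I]]`. -/
noncomputable def haarMat : (L : ℕ) → Matrix (Fin (2 ^ L)) (Fin (2 ^ L)) ℂ
  | 0 => 1
  | L + 1 =>
      castM (by ring)
        ((1 / (Real.sqrt 2 : ℂ)) • fromBlocks2 (haarMat L) (haarMat L) 1 (-1))

noncomputable def permM {n : ℕ} (σ : Equiv.Perm (Fin n)) : Matrix (Fin n) (Fin n) ℂ :=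
  Matrix.of fun i k => if σ i = k then 1 else 0

lemma permM_mul_permM {n : ℕ} (σ τ : Equiv.Perm (Fin n)) :
    permM σ * permM τ = permM (σ.trans τ) := by
  ext i k
  rw [Matrix.mul_apply]
  rw [Finset.sum_eq_single (σ i)]
  · simp [permM, Equiv.trans]
    congr
  · intro b _ hb; simp [permM, Ne.symm hb]
  · simp

lemma permM_mul {n : ℕ} (σ : Equiv.Perm (Fin n)) (A : Matrix (Fin n) (Fin n) ℂ) :
    permM σ * A = A.submatrix σ id := by
  ext i k
  rw [Matrix.mul_apply]
  rw [Finset.sum_eq_single (σ i)]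
  · simp [permM]
  · intro b _ hb; simp [permM, Ne.symm hb]
  · simp

lemma mul_permM {n : ℕ} (σ : Equiv.Perm (Fin n)) (A : Matrix (Fin n) (Fin n) ℂ) :
    A * permM σ = A.submatrix id (fun k => σ⁻¹ k) := by
  ext i k
  rw [Matrix.mul_apply]
  rw [Finset.sum_eq_single (σ⁻¹ k)]
  · simp [permM]
  · intro b _ hb
    simp only [permM, Matrix.of_apply]
    rw [if_neg, mul_zero]
    intro h; exact hb (by simp [← h])
  · simp

lemma castM_mul {m n : ℕ} (h : m = n) (A B : Matrix (Fin m) (Fin m) ℂ) :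
    castM h (A * B) = castM h A * castM h B := by
  subst h; simp [castM]

lemma castM_castM {m n p : ℕ} (h1 : m = n) (h2 : n = p) (A : Matrix (Fin m) (Fin m) ℂ) :
    castM h2 (castM h1 A) = castM (h1.trans h2) A := by
  subst h1; subst h2; rfl

lemma castM_permM {m n : ℕ} (h : m = n) (σ : Equiv.Perm (Fin m)) :
    castM h (permM σ) = permM ((finCongr h).symm.trans (σ.trans (finCongr h))) := by
  subst h; rfl




/-- Layer matrix with all phases zero. -/
noncomputable def Lmat (C S : ℕ) : Matrix (Fin (2 * C + S)) (Fin (2 * C + S)) ℂ :=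
  layerMatrix C S (fun _ => 0) (fun _ => 0) (fun _ => 0) (fun _ => 0)

/-- Entry of the zero-phase layer matrix, in terms of natural-number indices. -/
noncomputable def gEnt (C : ℕ) (i k : ℕ) : ℂ :=
  if i < 2 * C then
    (if k < 2 * C then
      (if i / 2 = k / 2 then
        (1 / (Real.sqrt 2 : ℂ)) * (if i % 2 = 0 ∨ k % 2 = 0 then 1 else -1)
       else 0)
     else 0)
  else if i = k then 1 else 0

lemma Lmat_apply (C S : ℕ) (i k : Fin (2 * C + S)) :
    Lmat C S i k = gEnt C i.val k.val := by
  simp only [Lmat, layerMatrix, gEnt, Matrix.of_apply]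
  by_cases hi : i.val < 2 * C
  · simp only [dif_pos hi, if_pos hi]
    by_cases hk : k.val < 2 * C
    · simp only [dif_pos hk, if_pos hk]
      by_cases hd : i.val / 2 = k.val / 2
      · simp only [if_pos hd]
        by_cases hi2 : i.val % 2 = 0
        · simp only [if_pos hi2, if_pos (Or.inl hi2)]
          by_cases hk2 : k.val % 2 = 0 <;> simp [hk2]
        · simp only [if_neg hi2]
          by_cases hk2 : k.val % 2 = 0
          · simp [hk2]
          · simp only [if_neg hk2, if_neg (by tauto : ¬(i.val % 2 = 0 ∨ k.val % 2 = 0))]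
            norm_num [mul_comm Complex.I, Complex.exp_pi_mul_I]
      · simp [hd]
    · simp [hk]
  · simp only [dif_neg hi, if_neg hi]
    by_cases he : i = k
    · simp [he, Fin.ext_iff.mp he]
    · rw [if_neg he, if_neg (fun h => he (Fin.ext h))]

lemma castM_Lmat_apply {C S n : ℕ} (h : 2 * C + S = n) (i k : Fin n) :
    castM h (Lmat C S) i k = gEnt C i.val k.val := by
  subst h
  exact Lmat_apply C S i k

lemma Lmat_congr {C S C' S' n : ℕ} (hC : C = C') (hS : S = S')
    (h : 2 * C + S = n) (h' : 2 * C' + S' = n) :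
    castM h (Lmat C S) = castM h' (Lmat C' S') := by
  subst hC; subst hS; rfl

lemma finSumFinEquiv_symm_eq {m n : ℕ} (i : Fin (m + n)) :
    finSumFinEquiv.symm i = if h : i.val < m then Sum.inl ⟨i.val, h⟩
      else Sum.inr ⟨i.val - m, by have := i.isLt; omega⟩ := by
  split
  · next h =>
      rw [Equiv.symm_apply_eq, finSumFinEquiv_apply_left]
      exact Fin.ext rfl
  · next h =>
      rw [Equiv.symm_apply_eq, finSumFinEquiv_apply_right]
      exact Fin.ext (by simp; omega)

lemma fromBlocks2_apply {m : ℕ} (A B C D : Matrix (Fin m) (Fin m) ℂ) (i k : Fin (m + m)) :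
    fromBlocks2 A B C D i k =
      if hi : i.val < m then
        (if hk : k.val < m then A ⟨i.val, hi⟩ ⟨k.val, hk⟩
         else B ⟨i.val, hi⟩ ⟨k.val - m, by have := k.isLt; omega⟩)
      else
        (if hk : k.val < m then C ⟨i.val - m, by have := i.isLt; omega⟩ ⟨k.val, hk⟩
         else D ⟨i.val - m, by have := i.isLt; omega⟩ ⟨k.val - m, by have := k.isLt; omega⟩) := by
  simp only [fromBlocks2, Matrix.reindex_apply, Matrix.submatrix_apply, finSumFinEquiv_symm_eq]
  by_cases hi : i.val < m <;> by_cases hk : k.val < m <;> simp [hi, hk]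

lemma fromBlocks2_mul {m : ℕ} (A B C D A' B' C' D' : Matrix (Fin m) (Fin m) ℂ) :
    fromBlocks2 A B C D * fromBlocks2 A' B' C' D' =
      fromBlocks2 (A * A' + B * C') (A * B' + B * D') (C * A' + D * C') (C * B' + D * D') := by
  simp only [fromBlocks2, Matrix.reindex_apply]
  rw [Matrix.submatrix_mul_equiv, Matrix.fromBlocks_multiply]

/-- Pad with an identity block. -/
noncomputable def padI {m : ℕ} (A : Matrix (Fin m) (Fin m) ℂ) :
    Matrix (Fin (m + m)) (Fin (m + m)) ℂ :=
  fromBlocks2 A 0 0 1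

lemma padI_mul {m : ℕ} (A B : Matrix (Fin m) (Fin m) ℂ) :
    padI (A * B) = padI A * padI B := by
  simp [padI, fromBlocks2_mul]

lemma padI_one {m : ℕ} : padI (1 : Matrix (Fin m) (Fin m) ℂ) = 1 := by
  simp only [padI, fromBlocks2, Matrix.fromBlocks_one]
  exact Matrix.submatrix_one_equiv _

noncomputable def padPerm {m : ℕ} (τ : Equiv.Perm (Fin m)) : Equiv.Perm (Fin (m + m)) :=
  finSumFinEquiv.symm.trans ((τ.sumCongr (Equiv.refl (Fin m))).trans finSumFinEquiv)

lemma padI_permM {m : ℕ} (τ : Equiv.Perm (Fin m)) :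
    padI (permM τ) = permM (padPerm τ) := by
  ext i k
  simp only [padI, fromBlocks2, permM, padPerm, Matrix.reindex_apply, Matrix.submatrix_apply,
    Matrix.of_apply, Equiv.trans_apply]
  obtain ⟨a, rfl⟩ : ∃ a, i = finSumFinEquiv a := ⟨_, (finSumFinEquiv.apply_symm_apply i).symm⟩
  obtain ⟨b, rfl⟩ : ∃ b, k = finSumFinEquiv b := ⟨_, (finSumFinEquiv.apply_symm_apply k).symm⟩
  simp only [Equiv.symm_apply_apply, Equiv.apply_eq_iff_eq]
  rcases a with a | a <;> rcases b with b | b <;>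
    simp [Matrix.one_apply, Matrix.fromBlocks]

lemma castM_smul {m n : ℕ} (h : m = n) (c : ℂ) (A : Matrix (Fin m) (Fin m) ℂ) :
    castM h (c • A) = c • castM h A := by subst h; rfl

lemma castM_one {m n : ℕ} (h : m = n) : castM h (1 : Matrix (Fin m) (Fin m) ℂ) = 1 := by
  subst h; rfl

lemma padI_prod {m : ℕ} (l : List (Matrix (Fin m) (Fin m) ℂ)) :
    padI l.prod = (l.map padI).prod := by
  induction l with
  | nil => simpa using padI_one
  | cons a t ih => simp [padI_mul, ih]

lemma castM_prod {m n : ℕ} (h : m = n) (l : List (Matrix (Fin m) (Fin m) ℂ)) :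
    castM h l.prod = (l.map (castM h)).prod := by
  induction l with
  | nil => simpa using castM_one h
  | cons a t ih => simp [castM_mul, ih]

lemma padI_Lmat {C S m : ℕ} (h1 : 2 * C + S = m) :
    padI (castM h1 (Lmat C S)) =
      castM (by omega : 2 * C + (S + m) = m + m) (Lmat C (S + m)) := by
  ext i k
  rw [castM_Lmat_apply, padI, fromBlocks2_apply]
  have hC : 2 * C ≤ m := by omega
  have hi2 := i.isLt
  have hk2 := k.isLt
  by_cases hi : i.val < m
  · rw [dif_pos hi]
    by_cases hk : k.val < m
    · rw [dif_pos hk, castM_Lmat_apply]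
    · rw [dif_neg hk]
      simp only [Matrix.zero_apply, gEnt]
      split_ifs <;> first | rfl | omega
  · rw [dif_neg hi]
    by_cases hk : k.val < m
    · rw [dif_pos hk]
      simp only [Matrix.zero_apply, gEnt]
      split_ifs <;> first | rfl | omega
    · rw [dif_neg hk]
      simp only [Matrix.one_apply, gEnt, Fin.mk.injEq]
      split_ifs <;> first | rfl | omega

noncomputable def shuffle (m : ℕ) : Equiv.Perm (Fin (m + m)) :=
  { toFun := fun i => ⟨m * (i.val % 2) + i.val / 2, by
      have := i.isLt
      rcases Nat.mod_two_eq_zero_or_one i.val with h | h <;> rw [h] <;> omega⟩,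
    invFun := fun i => if h : i.val < m then ⟨2 * i.val, by omega⟩
      else ⟨2 * (i.val - m) + 1, by have := i.isLt; omega⟩,
    left_inv := fun i => by
      have hi := i.isLt
      rcases Nat.mod_two_eq_zero_or_one i.val with h2 | h2
      · have h : m * (i.val % 2) + i.val / 2 < m := by rw [h2]; omega
        simp only [dif_pos h]
        exact Fin.ext (by simp only [h2]; omega)
      · have h : ¬ (m * (i.val % 2) + i.val / 2 < m) := by rw [h2]; omega
        simp only [dif_neg h]
        exact Fin.ext (by simp only [h2]; omega),
    right_inv := fun i => by
      have hi := i.isLt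
      by_cases h : i.val < m
      · simp only [dif_pos h]
        refine Fin.ext ?_
        show m * ((2 * i.val) % 2) + (2 * i.val) / 2 = i.val
        have h0 : (2 * i.val) % 2 = 0 := by omega
        rw [h0]; omega
      · simp only [dif_neg h]
        refine Fin.ext ?_
        show m * ((2 * (i.val - m) + 1) % 2) + (2 * (i.val - m) + 1) / 2 = i.val
        have h0 : (2 * (i.val - m) + 1) % 2 = 1 := by omega
        rw [h0]; omega }

lemma shuffle_inv_val {m : ℕ} (i : Fin (m + m)) :
    (((shuffle m)⁻¹ : Equiv.Perm (Fin (m + m))) i).val =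
      if i.val < m then 2 * i.val else 2 * (i.val - m) + 1 := by
  show (((shuffle m).symm : Equiv.Perm (Fin (m + m))) i).val = _
  simp only [shuffle, Equiv.coe_fn_symm_mk]
  split
  · next h => simp [dif_pos h]
  · next h => simp [dif_neg h]

lemma shuffle_Hm (m : ℕ) :
    (1 / (Real.sqrt 2 : ℂ)) • fromBlocks2 (1 : Matrix (Fin m) (Fin m) ℂ) 1 1 (-1) =
      permM (shuffle m)⁻¹ * castM (by omega : 2 * m + 0 = m + m) (Lmat m 0) *
        permM (shuffle m) := by
  ext i k
  rw [mul_permM, permM_mul, Matrix.submatrix_apply, Matrix.submatrix_apply, castM_Lmat_apply,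
    Matrix.smul_apply, fromBlocks2_apply]
  simp only [id_eq]
  have hi2 := i.isLt
  have hk2 := k.isLt
  have hvi := shuffle_inv_val i
  have hvk := shuffle_inv_val k
  by_cases hi : i.val < m
  · rw [if_pos hi] at hvi
    by_cases hk : k.val < m
    · rw [if_pos hk] at hvk
      rw [dif_pos hi, dif_pos hk, hvi, hvk]
      have e1 : (2 * i.val) / 2 = i.val := by omega
      have e2 : (2 * k.val) / 2 = k.val := by omega
      have o1 : (2 * i.val) % 2 = 0 := by omega
      have o2 : (2 * k.val) % 2 = 0 := by omega
      have e3 : (2 * (i.val - m) + 1) / 2 = i.val - m := by omega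
      have e4 : (2 * (k.val - m) + 1) / 2 = k.val - m := by omega
      have o3 : (2 * (i.val - m) + 1) % 2 = 1 := by omega
      have o4 : (2 * (k.val - m) + 1) % 2 = 1 := by omega
      simp only [e1, e2, e3, e4, o1, o2, o3, o4, gEnt, Matrix.one_apply, Matrix.neg_apply,
        Fin.mk.injEq, mul_ite, mul_one, mul_neg, mul_zero, smul_eq_mul]
      split_ifs <;> first | rfl | omega | tauto | norm_num | tauto
    · rw [if_neg hk] at hvk
      rw [dif_pos hi, dif_neg hk, hvi, hvk]
      have e1 : (2 * i.val) / 2 = i.val := by omega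
      have e2 : (2 * k.val) / 2 = k.val := by omega
      have o1 : (2 * i.val) % 2 = 0 := by omega
      have o2 : (2 * k.val) % 2 = 0 := by omega
      have e3 : (2 * (i.val - m) + 1) / 2 = i.val - m := by omega
      have e4 : (2 * (k.val - m) + 1) / 2 = k.val - m := by omega
      have o3 : (2 * (i.val - m) + 1) % 2 = 1 := by omega
      have o4 : (2 * (k.val - m) + 1) % 2 = 1 := by omega
      simp only [e1, e2, e3, e4, o1, o2, o3, o4, gEnt, Matrix.one_apply, Matrix.neg_apply,
        Fin.mk.injEq, mul_ite, mul_one, mul_neg, mul_zero, smul_eq_mul]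
      split_ifs <;> first | rfl | omega | tauto | norm_num
  · rw [if_neg hi] at hvi
    by_cases hk : k.val < m
    · rw [if_pos hk] at hvk
      rw [dif_neg hi, dif_pos hk, hvi, hvk]
      have e1 : (2 * i.val) / 2 = i.val := by omega
      have e2 : (2 * k.val) / 2 = k.val := by omega
      have o1 : (2 * i.val) % 2 = 0 := by omega
      have o2 : (2 * k.val) % 2 = 0 := by omega
      have e3 : (2 * (i.val - m) + 1) / 2 = i.val - m := by omega
      have e4 : (2 * (k.val - m) + 1) / 2 = k.val - m := by omega
      have o3 : (2 * (i.val - m) + 1) % 2 = 1 := by omega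
      have o4 : (2 * (k.val - m) + 1) % 2 = 1 := by omega
      simp only [e1, e2, e3, e4, o1, o2, o3, o4, gEnt, Matrix.one_apply, Matrix.neg_apply,
        Fin.mk.injEq, mul_ite, mul_one, mul_neg, mul_zero, smul_eq_mul]
      split_ifs <;> first | rfl | omega | tauto | norm_num
    · rw [if_neg hk] at hvk
      rw [dif_neg hi, dif_neg hk, hvi, hvk]
      have e1 : (2 * i.val) / 2 = i.val := by omega
      have e2 : (2 * k.val) / 2 = k.val := by omega
      have o1 : (2 * i.val) % 2 = 0 := by omega
      have o2 : (2 * k.val) % 2 = 0 := by omega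
      have e3 : (2 * (i.val - m) + 1) / 2 = i.val - m := by omega
      have e4 : (2 * (k.val - m) + 1) / 2 = k.val - m := by omega
      have o3 : (2 * (i.val - m) + 1) % 2 = 1 := by omega
      have o4 : (2 * (k.val - m) + 1) % 2 = 1 := by omega
      simp only [e1, e2, e3, e4, o1, o2, o3, o4, gEnt, Matrix.one_apply, Matrix.neg_apply,
        Fin.mk.injEq, mul_ite, mul_one, mul_neg, mul_zero, smul_eq_mul]
      split_ifs <;> first | rfl | omega | tauto | norm_num

noncomputable def cp {m n : ℕ} (h : m = n) (τ : Equiv.Perm (Fin m)) : Equiv.Perm (Fin n) :=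
  (finCongr h).symm.trans (τ.trans (finCongr h))

lemma permM_cp {m n : ℕ} (h : m = n) (τ : Equiv.Perm (Fin m)) :
    permM (cp h τ) = castM h (permM τ) := (castM_permM h τ).symm

lemma permM_refl {n : ℕ} : permM (Equiv.refl (Fin n)) = 1 := by
  ext i k; simp [permM, Matrix.one_apply]
  congr

lemma bigD_eq (L : ℕ) (i : Fin L) :
    2 * 2 ^ (L - (i.val + 1)) + (2 ^ L - 2 ^ (L - (i.val + 1) + 1)) = 2 ^ L := by
      have hi := i.isLt
      have h2 : (2 : ℕ) ^ (L - (i.val + 1) + 1) ≤ 2 ^ L :=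
        Nat.pow_le_pow_right (by norm_num) (by omega)
      rw [← pow_succ']
      exact Nat.add_sub_cancel' h2

noncomputable def bigD (L : ℕ) (i : Fin L) : Matrix (Fin (2 ^ L)) (Fin (2 ^ L)) ℂ :=
  castM (bigD_eq L i)
    (Lmat (2 ^ (L - (i.val + 1))) (2 ^ L - 2 ^ (L - (i.val + 1) + 1)))

lemma haar_one : haarMat 1 = castM (by norm_num) (Lmat 1 0) := by
  have hs : shuffle 1 = Equiv.refl (Fin (1 + 1)) := by
    apply Equiv.ext
    intro i
    have := i.isLt
    apply Fin.ext
    show 1 * (i.val % 2) + i.val / 2 = i.val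
    omega
  have e0 : haarMat 1 = castM (by norm_num)
      ((1 / (Real.sqrt 2 : ℂ)) • fromBlocks2 (haarMat 0) (haarMat 0) 1 (-1)) := rfl
  rw [e0]
  rw [show haarMat 0 = 1 from rfl]
  rw [shuffle_Hm 1, hs]
  rw [show (Equiv.refl (Fin (1 + 1)))⁻¹ = Equiv.refl (Fin (1 + 1)) from rfl]
  rw [permM_refl, one_mul, mul_one, castM_castM]

lemma prod_finRange_succ {M : Type*} [Monoid M] (n : ℕ) (f : Fin (n + 1) → M) :
    ((List.finRange (n + 1)).reverse.map f).prod =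
      ((List.finRange n).reverse.map (fun i => f i.succ)).prod * f 0 := by
  rw [List.finRange_succ, List.reverse_cons, List.map_append, List.prod_append,
    ← List.map_reverse, List.map_map]
  simp only [Function.comp_def, List.map_reverse, List.prod_cons, List.prod_nil, mul_one,
    List.map_cons, List.map_nil]

lemma key : ∀ L : ℕ, 1 ≤ L → ∃ P : Fin (L + 1) → Equiv.Perm (Fin (2 ^ L)),
    haarMat L = ((List.finRange L).reverse.map
      fun i => permM (P i.succ) * bigD L i).prod * permM (P 0) := by
  intro L
  induction L with
  | zero => omega
  | succ L ih =>
    intro _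
    rcases Nat.eq_zero_or_pos L with rfl | hL1
    · refine ⟨fun _ => Equiv.refl _, ?_⟩
      rw [show (List.finRange 1) = [(0 : Fin 1)] from rfl]
      simp only [List.reverse_cons, List.reverse_nil, List.nil_append, List.map_cons,
        List.map_nil, List.prod_cons, List.prod_nil, mul_one, permM_refl, one_mul]
      rw [haar_one]
      simp only [bigD]
      exact Lmat_congr (by norm_num) (by norm_num) _ _
    · obtain ⟨P', hP'⟩ := ih hL1
      have hm : 2 ^ L + 2 ^ L = 2 ^ (L + 1) := by rw [pow_succ]; ring
      have h20 : 2 * 2 ^ L + 0 = 2 ^ L + 2 ^ L := by ring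
      have hDpad : ∀ i : Fin L,
          castM hm (padI (bigD L i)) = bigD (L + 1) i.succ := by
        intro i
        have hi := i.isLt
        simp only [bigD]
        rw [padI_Lmat, castM_castM]
        have hp : 2 ^ (L - (i.val + 1) + 1) ≤ 2 ^ L :=
          Nat.pow_le_pow_right (by norm_num) (by omega)
        have h2L : 2 ^ (L + 1) = 2 ^ L + 2 ^ L := hm.symm
        refine Lmat_congr ?_ ?_ _ _
        · exact congrArg (2 ^ ·) (by simp only [Fin.val_succ]; omega)
        · have hq : (L + 1) - (i.succ.val + 1) + 1 = L - (i.val + 1) + 1 := by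
            simp only [Fin.val_succ]; omega
          rw [hq]
          omega
      have hD0 : castM hm (castM h20 (Lmat (2 ^ L) 0)) = bigD (L + 1) 0 := by
        simp only [bigD]
        rw [castM_castM]
        refine Lmat_congr ?_ ?_ _ _
        · exact congrArg (2 ^ ·) (by simp only [Fin.val_zero]; omega)
        · have hq : (L + 1) - ((0 : Fin (L + 1)).val + 1) + 1 = L + 1 := by
            simp only [Fin.val_zero]; omega
          rw [hq]
          omega
      refine ⟨fun j => Fin.cases (cp hm (shuffle (2 ^ L)))
        (fun j' => Fin.cases (cp hm ((padPerm (P' 0)).trans (shuffle (2 ^ L))⁻¹))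
          (fun i => cp hm (padPerm (P' i.succ))) j') j, ?_⟩
      rw [prod_finRange_succ]
      simp only [Fin.cases_succ, Fin.cases_zero]
      -- evaluate permM of the composed permutation
      rw [show permM (cp hm ((padPerm (P' 0)).trans (shuffle (2 ^ L))⁻¹))
            = castM hm (permM (padPerm (P' 0))) * castM hm (permM (shuffle (2 ^ L))⁻¹) from by
        rw [permM_cp, ← permM_mul_permM, castM_mul]]
      simp only [permM_cp]
      simp only [← hDpad, ← hD0, ← padI_permM]
      -- now expand the left-hand side
      have e0 : haarMat (L + 1) = castM hm
          ((1 / (Real.sqrt 2 : ℂ)) • fromBlocks2 (haarMat L) (haarMat L) 1 (-1)) := rfl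
      have e1 : (1 / (Real.sqrt 2 : ℂ)) • fromBlocks2 (haarMat L) (haarMat L) 1 (-1)
          = padI (haarMat L) * ((1 / (Real.sqrt 2 : ℂ)) • fromBlocks2 1 1 1 (-1)) := by
        rw [mul_smul_comm]
        congr 1
        rw [padI, fromBlocks2_mul]
        congr 1 <;> simp
      rw [e0, e1, shuffle_Hm, hP']
      rw [padI_mul, padI_prod, List.map_map]
      simp only [castM_mul]
      rw [castM_prod, List.map_map]
      have hmap : ∀ i : Fin L, ((castM hm) ∘ padI ∘ fun i => permM (P' i.succ) * bigD L i) i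
          = castM hm (padI (permM (P' i.succ))) * castM hm (padI (bigD L i)) := by
        intro i
        simp only [Function.comp_apply, padI_mul, castM_mul]
      rw [List.map_congr_left (fun i _ => hmap i)]
      simp only [mul_assoc]

/-- **Matrix content of Corollary 5 (Haar implementability)**: for `N = 2^L`, `L ≥ 1`, the
Haar matrix has a decomposition `W_N = P_L·D_L·⋯·P_1·D_1·P_0` with permutation matrices
`P_ℓ` and layer matrices `D_ℓ` as in Theorem 1; moreover this holds with
`C_ℓ = 2^{L−ℓ}`, `S_ℓ = 2^L − 2^{L−ℓ+1}`, and all phases zero. -/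
theorem haar_implementable (L : ℕ) (hL : 1 ≤ L) :
    (∃ (P : Fin (L + 1) → Matrix (Fin (2 ^ L)) (Fin (2 ^ L)) ℂ)
        (D : Fin L → Matrix (Fin (2 ^ L)) (Fin (2 ^ L)) ℂ),
        (∀ ℓ, IsPermutationMatrix (P ℓ)) ∧ (∀ ℓ, LayerForm (D ℓ)) ∧
        haarMat L =
          ((List.finRange L).reverse.map fun i => P i.succ * D i).prod * P 0)
    ∧
    (∃ P : Fin (L + 1) → Matrix (Fin (2 ^ L)) (Fin (2 ^ L)) ℂ,
      (∀ ℓ, IsPermutationMatrix (P ℓ)) ∧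
      haarMat L =
        ((List.finRange L).reverse.map fun i : Fin L =>
            P i.succ *
              castM
                (show 2 * 2 ^ (L - (i.val + 1)) + (2 ^ L - 2 ^ (L - (i.val + 1) + 1)) = 2 ^ L by
                  have hi := i.isLt
                  have h2 : (2 : ℕ) ^ (L - (i.val + 1) + 1) ≤ 2 ^ L :=
                    Nat.pow_le_pow_right (by norm_num) (by omega)
                  rw [← pow_succ']
                  exact Nat.add_sub_cancel' h2)
                (layerMatrix (2 ^ (L - (i.val + 1))) (2 ^ L - 2 ^ (L - (i.val + 1) + 1))
                  (fun _ => 0) (fun _ => 0) (fun _ => 0) (fun _ => 0))).prod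
          * P 0) := by
  obtain ⟨P, hP⟩ := key L hL
  constructor
  · refine ⟨fun j => permM (P j), fun i => bigD L i,
      fun ℓ => ⟨P ℓ, fun i k => rfl⟩, ?_, hP⟩
    intro ℓ
    refine ⟨2 ^ (L - (ℓ.val + 1)), 2 ^ L - 2 ^ (L - (ℓ.val + 1) + 1), by
        have hi := ℓ.isLt
        have h2 : (2 : ℕ) ^ (L - (ℓ.val + 1) + 1) ≤ 2 ^ L :=
          Nat.pow_le_pow_right (by norm_num) (by omega)
        rw [← pow_succ']
        exact Nat.add_sub_cancel' h2,
      fun _ => 0, fun _ => 0, fun _ => 0, fun _ => 0, rfl⟩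
  · exact ⟨fun j => permM (P j), fun ℓ => ⟨P ℓ, fun i k => rfl⟩, hP⟩
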